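/- Let β = (y,v) ∈ 𝓟. (a) If x ∈ P with x ≠ y and v ∉ x^⊥, then d(x, β) = 3 in 𝕊. (b) If u' ∈ P' with u ≠ v and u ∉ y^⊥, then d(u', β) = 3 in 𝕊. -/

import Mathlib

/- Common setup: the generalized quadrangle of order (2,2) on the edges of a
   6-element set, the near hexagon 𝓢 = ℍ₃, and the near hexagon 𝕊 = DSp(6,2). -/

/-- An edge: a 2-element subset of `Fin 6`. -/
abbrev Edge : Type := {e : Finset (Fin 6) // e.card = 2}

/-- `perp A` is `A^⊥`: the set of edges equal to or disjoint from every element of `A`. -/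
def perp (A : Set Edge) : Set Edge := {y | ∀ x ∈ A, x = y ∨ Disjoint x.1 y.1}

/-- A factor: a set of three pairwise disjoint edges (a perfect matching of `Fin 6`). -/
def IsFactor (T : Set Edge) : Prop :=
  T.ncard = 3 ∧ T.Pairwise (fun x y => Disjoint x.1 y.1)

/-- A triad: a set of three pairwise non-collinear (i.e. pairwise intersecting) distinct
    edges. -/
def IsTriad (T : Set Edge) : Prop :=
  T.ncard = 3 ∧ T.Pairwise (fun x y => ¬ Disjoint x.1 y.1)

/-- A complete triad: a triad not contained in a set of four pairwise non-collinear edges. -/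
def IsCompleteTriad (T : Set Edge) : Prop :=
  IsTriad T ∧
    ¬ ∃ U : Set Edge, T ⊆ U ∧ U.ncard = 4 ∧ U.Pairwise (fun x y => ¬ Disjoint x.1 y.1)

/-- The point set 𝓟 of 𝓢 : pairs `(x,u)` of edges with `x = u` or `x ∩ u = ∅`. -/
def NPoint : Type := {p : Edge × Edge // p.1 = p.2 ∨ Disjoint p.1.1 p.2.1}

/-- The lines 𝓛 of 𝓢 : sets `{(x, σ x) : x ∈ T}` where `T` is a factor or a complete
    triad and `σ : T → T^⊥` is a bijection. -/
def IsLine (L : Set NPoint) : Prop :=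
  ∃ (T : Set Edge) (σ : Edge → Edge),
    (IsFactor T ∨ IsCompleteTriad T) ∧ Set.BijOn σ T (perp T) ∧
    L = {p : NPoint | p.1.1 ∈ T ∧ p.1.2 = σ p.1.1}

/-- The collinearity graph of 𝓢. -/
def NG : SimpleGraph NPoint where
  Adj α β := α ≠ β ∧ ∃ L, IsLine L ∧ α ∈ L ∧ β ∈ L
  symm := ⟨fun _ _ ⟨h, L, hL, ha, hb⟩ => ⟨h.symm, L, hL, hb, ha⟩⟩
  loopless := ⟨fun _ h => h.1 rfl⟩

/-- The point set ℙ of 𝕊 : the disjoint union 𝓟 ⊔ P ⊔ P' where `P` and `P'` are two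
    copies of the edge set. -/
def BPoint : Type := NPoint ⊕ Edge ⊕ Edge

/-- Embedding of 𝓟 into ℙ. -/
def inS (p : NPoint) : BPoint := Sum.inl p

/-- Embedding of the first copy `P` of the edge set into ℙ (an edge `x` gives `x ∈ P`). -/
def inP (x : Edge) : BPoint := Sum.inr (Sum.inl x)

/-- Embedding of the second copy `P'` of the edge set into ℙ (an edge `u` gives `u' ∈ P'`). -/
def inP' (u : Edge) : BPoint := Sum.inr (Sum.inr u)

/-- The lines 𝕃 of 𝕊 : the lines of 𝓛 together with the lines `{x, (x,u), u'}`
    for `(x,u) ∈ 𝓟` (the latter being the lines of type `𝕃₁`). -/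
def IsBLine (L : Set BPoint) : Prop :=
  (∃ L₀ : Set NPoint, IsLine L₀ ∧ L = inS '' L₀) ∨
  (∃ p : NPoint, L = {inP p.1.1, inS p, inP' p.1.2})

/-- The collinearity graph of 𝕊. -/
def BG : SimpleGraph BPoint where
  Adj α β := α ≠ β ∧ ∃ L, IsBLine L ∧ α ∈ L ∧ β ∈ L
  symm := ⟨fun _ _ ⟨h, L, hL, ha, hb⟩ => ⟨h.symm, L, hL, hb, ha⟩⟩
  loopless := ⟨fun _ h => h.1 rfl⟩

/-! ### Auxiliary lemmas -/

private lemma ne_of_disj {a b : Edge} (h : Disjoint a.1 b.1) : a ≠ b := by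
  rintro rfl
  have h1 : a.1 = ∅ := disjoint_self.mp h
  have h2 := a.2
  rw [h1] at h2
  simp at h2


private lemma inS_inj {p q : NPoint} (h : inS p = inS q) : p = q := by
  injection h

private lemma eqSS {p q : NPoint} : inS p = inS q ↔ p = q :=
  ⟨inS_inj, by rintro rfl; rfl⟩

private lemma eqPP {a b : Edge} : inP a = inP b ↔ a = b :=
  ⟨fun h => by injection h with h'; injection h', by rintro rfl; rfl⟩

private lemma eqP'P' {a b : Edge} : inP' a = inP' b ↔ a = b :=
  ⟨fun h => by injection h with h'; injection h', by rintro rfl; rfl⟩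

private lemma eqPS {a : Edge} {p : NPoint} : inP a = inS p ↔ False :=
  ⟨fun h => by injection h, False.elim⟩

private lemma eqSP {a : Edge} {p : NPoint} : inS p = inP a ↔ False :=
  ⟨fun h => by injection h, False.elim⟩

private lemma eqP'S {a : Edge} {p : NPoint} : inP' a = inS p ↔ False :=
  ⟨fun h => by injection h, False.elim⟩

private lemma eqSP' {a : Edge} {p : NPoint} : inS p = inP' a ↔ False :=
  ⟨fun h => by injection h, False.elim⟩

private lemma eqPP' {a b : Edge} : inP a = inP' b ↔ False :=
  ⟨fun h => by injection h with h'; injection h', False.elim⟩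

private lemma eqP'P {a b : Edge} : inP' a = inP b ↔ False :=
  ⟨fun h => by injection h with h'; injection h', False.elim⟩

private lemma pigeon {x y v c : Edge} (hyv : Disjoint y.1 v.1) (hyc : Disjoint y.1 c.1)
    (hvc : Disjoint v.1 c.1) (h1 : ¬Disjoint x.1 y.1) (h2 : ¬Disjoint x.1 v.1)
    (h3 : ¬Disjoint x.1 c.1) : False := by
  obtain ⟨p, hp⟩ := Finset.not_disjoint_iff_nonempty_inter.mp h1
  obtain ⟨q, hq⟩ := Finset.not_disjoint_iff_nonempty_inter.mp h2
  obtain ⟨r, hr⟩ := Finset.not_disjoint_iff_nonempty_inter.mp h3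
  simp only [Finset.mem_inter] at hp hq hr
  have hpq : p ≠ q := fun h => Finset.disjoint_left.mp hyv (h ▸ hp.2) hq.2
  have hpr : p ≠ r := fun h => Finset.disjoint_left.mp hyc (h ▸ hp.2) hr.2
  have hqr : q ≠ r := fun h => Finset.disjoint_left.mp hvc (h ▸ hq.2) hr.2
  have hsub : ({p, q, r} : Finset (Fin 6)) ⊆ x.1 := by
    intro a ha
    simp only [Finset.mem_insert, Finset.mem_singleton] at ha
    rcases ha with rfl | rfl | rfl
    · exact hp.1
    · exact hq.1
    · exact hr.1
  have hcard : ({p, q, r} : Finset (Fin 6)).card = 3 := by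
    rw [Finset.card_insert_of_notMem (by simp [hpq, hpr]),
      Finset.card_insert_of_notMem (by simp [hqr]), Finset.card_singleton]
  have := Finset.card_le_card hsub
  rw [hcard, x.2] at this
  omega

private lemma perp_triple {y w z : Edge} (dyw : Disjoint y.1 w.1) (dyz : Disjoint y.1 z.1)
    (dwz : Disjoint w.1 z.1) : perp {y, w, z} = {y, w, z} := by
  ext e
  constructor
  · intro he
    have h1 := he y (by left; rfl)
    have h2 := he w (by right; left; rfl)
    have h3 := he z (by right; right; rfl)
    rcases h1 with rfl | d1
    · exact Set.mem_insert _ _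
    rcases h2 with rfl | d2
    · exact Set.mem_insert_of_mem _ (Set.mem_insert _ _)
    rcases h3 with rfl | d3
    · exact Set.mem_insert_of_mem _ (Set.mem_insert_of_mem _ rfl)
    exfalso
    have hd : Disjoint (y.1 ∪ w.1 ∪ z.1) e.1 := by
      simp only [Finset.disjoint_union_left]
      exact ⟨⟨d1, d2⟩, d3⟩
    have hd2 : Disjoint (y.1 ∪ w.1) z.1 := Finset.disjoint_union_left.mpr ⟨dyz, dwz⟩
    have hc1 : (y.1 ∪ w.1).card = 4 := by
      rw [Finset.card_union_of_disjoint dyw, y.2, w.2]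
    have hc : (y.1 ∪ w.1 ∪ z.1).card = 6 := by
      rw [Finset.card_union_of_disjoint hd2, hc1, z.2]
    have huniv : (y.1 ∪ w.1 ∪ z.1) = Finset.univ := Finset.eq_univ_of_card _ (by rw [hc]; simp)
    rw [huniv] at hd
    have : e.1 = ⊥ := (hd.symm).eq_bot_of_le (Finset.subset_univ e.1)
    have h2 := e.2
    simp [this] at h2
  · intro he s hs
    simp only [Set.mem_insert_iff, Set.mem_singleton_iff] at he hs
    rcases he with rfl | rfl | rfl <;> rcases hs with rfl | rfl | rfl <;>
      first
        | exact Or.inl rfl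
        | exact Or.inr dyw | exact Or.inr dyw.symm
        | exact Or.inr dyz | exact Or.inr dyz.symm
        | exact Or.inr dwz | exact Or.inr dwz.symm

/-- The key construction of a line of 𝓢 through two points, from a factor `{y,w,z}`. -/
private lemma adj_line (y w z v u t : Edge)
    (dyw : Disjoint y.1 w.1) (dyz : Disjoint y.1 z.1) (dwz : Disjoint w.1 z.1)
    (hs : ({v, u, t} : Set Edge) = {y, w, z})
    (hvu : v ≠ u) (hvt : v ≠ t) (hut : u ≠ t)
    (p q : NPoint) (hp : p.1 = (w, u)) (hq : q.1 = (y, v)) :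
    BG.Adj (inS p) (inS q) := by
  have hyw : y ≠ w := ne_of_disj dyw
  have hyz : y ≠ z := ne_of_disj dyz
  have hwz : w ≠ z := ne_of_disj dwz
  set σ : Edge → Edge := fun e => if e = y then v else if e = w then u else t with hσdef
  have hσy : σ y = v := by simp [hσdef]
  have hσw : σ w = u := by simp [hσdef, hyw.symm]
  have hσz : σ z = t := by simp [hσdef, hyz.symm, hwz.symm]
  have hmemv : v ∈ ({y, w, z} : Set Edge) := by rw [← hs]; left; rfl
  have hmemu : u ∈ ({y, w, z} : Set Edge) := by rw [← hs]; right; left; rfl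
  have hmemt : t ∈ ({y, w, z} : Set Edge) := by rw [← hs]; right; right; rfl
  have hperp : perp {y, w, z} = {y, w, z} := perp_triple dyw dyz dwz
  have hfac : IsFactor ({y, w, z} : Set Edge) := by
    constructor
    · exact Set.ncard_eq_three.mpr ⟨y, w, z, hyw, hyz, hwz, rfl⟩
    · intro a ha b hb hab
      simp only [Set.mem_insert_iff, Set.mem_singleton_iff] at ha hb
      rcases ha with rfl | rfl | rfl <;> rcases hb with rfl | rfl | rfl <;>
        first
          | exact absurd rfl hab
          | exact dyw | exact dyw.symm
          | exact dyz | exact dyz.symm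
          | exact dwz | exact dwz.symm
  have hbij : Set.BijOn σ ({y, w, z} : Set Edge) (perp {y, w, z}) := by
    rw [hperp]
    refine ⟨?_, ?_, ?_⟩
    · intro a ha
      simp only [Set.mem_insert_iff, Set.mem_singleton_iff] at ha
      rcases ha with rfl | rfl | rfl
      · rw [hσy]; exact hmemv
      · rw [hσw]; exact hmemu
      · rw [hσz]; exact hmemt
    · intro a ha b hb hab
      simp only [Set.mem_insert_iff, Set.mem_singleton_iff] at ha hb
      rcases ha with rfl | rfl | rfl <;> rcases hb with rfl | rfl | rfl <;>
        simp only [hσy, hσw, hσz] at hab <;>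
        first
          | rfl
          | exact absurd hab hvu | exact absurd hab.symm hvu
          | exact absurd hab hvt | exact absurd hab.symm hvt
          | exact absurd hab hut | exact absurd hab.symm hut
    · have himg : σ '' ({y, w, z} : Set Edge) = {v, u, t} := by
        rw [Set.image_insert_eq, Set.image_insert_eq, Set.image_singleton, hσy, hσw, hσz]
      intro a ha
      rw [himg, hs]
      exact ha
  have hline : IsLine {r : NPoint | r.1.1 ∈ ({y, w, z} : Set Edge) ∧ r.1.2 = σ r.1.1} :=
    ⟨{y, w, z}, σ, Or.inl hfac, hbij, rfl⟩
  have hpmem : p ∈ {r : NPoint | r.1.1 ∈ ({y, w, z} : Set Edge) ∧ r.1.2 = σ r.1.1} := by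
    constructor
    · rw [hp]; right; left; rfl
    · show p.1.2 = σ p.1.1
      rw [hp]
      exact hσw.symm
  have hqmem : q ∈ {r : NPoint | r.1.1 ∈ ({y, w, z} : Set Edge) ∧ r.1.2 = σ r.1.1} := by
    constructor
    · rw [hq]; left; rfl
    · show q.1.2 = σ q.1.1
      rw [hq]
      exact hσy.symm
  refine ⟨?_, inS '' _, Or.inl ⟨_, hline, rfl⟩, ⟨p, hpmem, rfl⟩, ⟨q, hqmem, rfl⟩⟩
  intro h
  have hpq : p = q := inS_inj h
  rw [hpq, hq] at hp
  exact hyw (congrArg Prod.fst hp)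

private lemma adj_PP' (p : NPoint) : BG.Adj (inP p.1.1) (inP' p.1.2) := by
  refine ⟨fun h => eqPP'.mp h, {inP p.1.1, inS p, inP' p.1.2}, Or.inr ⟨p, rfl⟩, ?_, ?_⟩
  · left; rfl
  · right; right; rfl

private lemma adj_P'S (p : NPoint) : BG.Adj (inP' p.1.2) (inS p) := by
  refine ⟨fun h => eqP'S.mp h, {inP p.1.1, inS p, inP' p.1.2}, Or.inr ⟨p, rfl⟩, ?_, ?_⟩
  · right; right; rfl
  · right; left; rfl

private lemma adj_PS (p : NPoint) : BG.Adj (inP p.1.1) (inS p) := by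
  refine ⟨fun h => eqPS.mp h, {inP p.1.1, inS p, inP' p.1.2}, Or.inr ⟨p, rfl⟩, ?_, ?_⟩
  · left; rfl
  · right; left; rfl

private lemma adj_PS_elim {x : Edge} {p : NPoint} (h : BG.Adj (inP x) (inS p)) :
    p.1.1 = x := by
  obtain ⟨hne, L, hL, hx, hp⟩ := h
  rcases hL with ⟨L₀, _, rfl⟩ | ⟨q, rfl⟩
  · obtain ⟨r, _, hr⟩ := hx
    exact (eqSP.mp hr).elim
  · simp only [Set.mem_insert_iff, Set.mem_singleton_iff] at hx hp
    simp only [eqPP, eqSS, eqP'P', eqPS, eqSP, eqP'S, eqSP', eqPP', eqP'P, or_false,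
      false_or] at hx hp
    rw [hp, ← hx]

private lemma adj_P'S_elim {u : Edge} {p : NPoint} (h : BG.Adj (inP' u) (inS p)) :
    p.1.2 = u := by
  obtain ⟨hne, L, hL, hx, hp⟩ := h
  rcases hL with ⟨L₀, _, rfl⟩ | ⟨q, rfl⟩
  · obtain ⟨r, _, hr⟩ := hx
    exact (eqSP'.mp hr).elim
  · simp only [Set.mem_insert_iff, Set.mem_singleton_iff] at hx hp
    simp only [eqPP, eqSS, eqP'P', eqPS, eqSP, eqP'S, eqSP', eqPP', eqP'P, or_false,
      false_or] at hx hp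
    rw [hp, ← hx]

private lemma adj_PP'_elim {x u : Edge} (h : BG.Adj (inP x) (inP' u)) :
    x = u ∨ Disjoint x.1 u.1 := by
  obtain ⟨hne, L, hL, hx, hu⟩ := h
  rcases hL with ⟨L₀, _, rfl⟩ | ⟨q, rfl⟩
  · obtain ⟨r, _, hr⟩ := hx
    exact (eqSP.mp hr).elim
  · simp only [Set.mem_insert_iff, Set.mem_singleton_iff] at hx hu
    simp only [eqPP, eqSS, eqP'P', eqPS, eqSP, eqP'S, eqSP', eqPP', eqP'P, or_false,
      false_or] at hx hu
    rw [hx, hu]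
    exact q.2

private lemma not_adj_PP {x e : Edge} (h : BG.Adj (inP x) (inP e)) : False := by
  obtain ⟨hne, L, hL, hx, he⟩ := h
  rcases hL with ⟨L₀, _, rfl⟩ | ⟨q, rfl⟩
  · obtain ⟨r, _, hr⟩ := hx
    exact (eqSP.mp hr).elim
  · simp only [Set.mem_insert_iff, Set.mem_singleton_iff] at hx he
    simp only [eqPP, eqSS, eqP'P', eqPS, eqSP, eqP'S, eqSP', eqPP', eqP'P, or_false,
      false_or] at hx he
    exact hne (by rw [hx, he])

private lemma not_adj_P'P' {x e : Edge} (h : BG.Adj (inP' x) (inP' e)) : False := by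
  obtain ⟨hne, L, hL, hx, he⟩ := h
  rcases hL with ⟨L₀, _, rfl⟩ | ⟨q, rfl⟩
  · obtain ⟨r, _, hr⟩ := hx
    exact (eqSP'.mp hr).elim
  · simp only [Set.mem_insert_iff, Set.mem_singleton_iff] at hx he
    simp only [eqPP, eqSS, eqP'P', eqPS, eqSP, eqP'S, eqSP', eqPP', eqP'P, or_false,
      false_or] at hx he
    exact hne (by rw [hx, he])

private lemma adj_SS_elim {p q : NPoint} (h : BG.Adj (inS p) (inS q)) : NG.Adj p q := by
  obtain ⟨hne, L, hL, hp, hq⟩ := h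
  have hpq : p ≠ q := fun h => hne (congrArg inS h)
  rcases hL with ⟨L₀, hL₀, rfl⟩ | ⟨r, rfl⟩
  · obtain ⟨a, ha, ha'⟩ := hp
    obtain ⟨b, hb, hb'⟩ := hq
    have h1 : a = p := inS_inj ha'
    have h2 : b = q := inS_inj hb'
    subst h1; subst h2
    exact ⟨hpq, L₀, hL₀, ha, hb⟩
  · exfalso
    simp only [Set.mem_insert_iff, Set.mem_singleton_iff] at hp hq
    simp only [eqPP, eqSS, eqP'P', eqPS, eqSP, eqP'S, eqSP', eqPP', eqP'P, or_false,
      false_or] at hp hq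
    exact hpq (by rw [hp, hq])

private lemma NG_adj_perp {p q : NPoint} (h : NG.Adj p q) :
    q.1.1 = p.1.2 ∨ Disjoint q.1.1.1 p.1.2.1 := by
  obtain ⟨hne, L, ⟨T, σ, hT, hbij, rfl⟩, hp, hq⟩ := h
  obtain ⟨hp1, hp2⟩ := hp
  obtain ⟨hq1, hq2⟩ := hq
  have hmem : σ p.1.1 ∈ perp T := hbij.mapsTo hp1
  have := hmem q.1.1 hq1
  rw [← hp2] at this
  exact this

private lemma dist_eq_three {V : Type*} {G : SimpleGraph V} {a b : V} (hne : a ≠ b)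
    (hnadj : ¬ G.Adj a b) (hmid : ∀ z, ¬(G.Adj a z ∧ G.Adj z b))
    {c d : V} (h1 : G.Adj a c) (h2 : G.Adj c d) (h3 : G.Adj d b) : G.dist a b = 3 := by
  have hle : G.dist a b ≤ 3 := by
    have := G.dist_le (SimpleGraph.Walk.cons h1 (SimpleGraph.Walk.cons h2
      (SimpleGraph.Walk.cons h3 SimpleGraph.Walk.nil)))
    simpa using this
  have hr : G.Reachable a b := ⟨SimpleGraph.Walk.cons h1 (SimpleGraph.Walk.cons h2
      (SimpleGraph.Walk.cons h3 SimpleGraph.Walk.nil))⟩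
  obtain ⟨p, hp⟩ := hr.exists_walk_length_eq_dist
  have h0 : G.dist a b ≠ 0 := by
    intro h
    exact hne (hr.dist_eq_zero_iff.mp h)
  have hd1 : G.dist a b ≠ 1 := by
    intro h
    rw [h] at hp
    cases p with
    | nil => simp at hp
    | cons hadj q =>
      cases q with
      | nil => exact hnadj hadj
      | cons _ _ => simp [SimpleGraph.Walk.length_cons] at hp
  have hd2 : G.dist a b ≠ 2 := by
    intro h
    rw [h] at hp
    cases p with
    | nil => simp at hp
    | cons ha q =>
      cases q with
      | nil => simp at hp
      | cons hm q' =>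
        cases q' with
        | nil => exact hmid _ ⟨ha, hm⟩
        | cons _ _ => simp [SimpleGraph.Walk.length_cons] at hp
  omega

/-- The shared construction for the case `β = (y,y)`. -/
private lemma caseB (β : NPoint) (y e : Edge) (hβ : β.1 = (y, y)) (hne : e ≠ y)
    (hnd : ¬Disjoint e.1 y.1) :
    ∃ m : NPoint, m.1.1 = m.1.2 ∧ Disjoint m.1.1.1 e.1 ∧ BG.Adj (inS m) (inS β) := by
  have hcap_pos : 0 < (e.1 ∩ y.1).card :=
    Finset.card_pos.mpr (Finset.not_disjoint_iff_nonempty_inter.mp hnd)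
  have hcaple : (e.1 ∩ y.1).card ≤ 2 := by
    have := Finset.card_le_card (Finset.inter_subset_left : e.1 ∩ y.1 ⊆ e.1)
    rw [e.2] at this
    exact this
  have hcapne : (e.1 ∩ y.1).card ≠ 2 := by
    intro h
    have h1 : e.1 ∩ y.1 = e.1 :=
      Finset.eq_of_subset_of_card_le Finset.inter_subset_left (by rw [h, e.2])
    have h2 : e.1 ⊆ y.1 := by rw [← h1]; exact Finset.inter_subset_right
    have h3 : e.1 = y.1 := Finset.eq_of_subset_of_card_le h2 (by rw [e.2, y.2])
    exact hne (Subtype.ext h3)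
  have hunion : (e.1 ∪ y.1).card = 3 := by
    have := Finset.card_union_add_card_inter e.1 y.1
    rw [e.2, y.2] at this
    omega
  have hcompl : ((e.1 ∪ y.1)ᶜ).card = 3 := by
    rw [Finset.card_compl, hunion]
    simp
  obtain ⟨a', ha's, ha'c⟩ := Finset.exists_subset_card_eq
    (show 2 ≤ ((e.1 ∪ y.1)ᶜ).card by omega)
  have hdae : Disjoint a' e.1 :=
    ((disjoint_compl_left).mono_left ha's).mono_right Finset.subset_union_left
  have hday : Disjoint a' y.1 :=
    ((disjoint_compl_left).mono_left ha's).mono_right Finset.subset_union_right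
  set a : Edge := ⟨a', ha'c⟩ with ha
  have hbcard : ((y.1 ∪ a')ᶜ).card = 2 := by
    rw [Finset.card_compl, Finset.card_union_of_disjoint hday.symm, y.2, ha'c]
    simp
  set b : Edge := ⟨(y.1 ∪ a')ᶜ, hbcard⟩ with hb
  have hdyb : Disjoint y.1 b.1 :=
    (disjoint_compl_right).mono_left Finset.subset_union_left
  have hdab : Disjoint a.1 b.1 :=
    (disjoint_compl_right).mono_left Finset.subset_union_right
  refine ⟨⟨(a, a), Or.inl rfl⟩, rfl, hdae, ?_⟩
  exact adj_line y a b y a b hday.symm hdyb hdab rfl (ne_of_disj hday.symm)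
    (ne_of_disj hdyb) (ne_of_disj hdab) ⟨(a, a), Or.inl rfl⟩ β rfl hβ

/-- Existence of a suitable midpoint for part (a). -/
private lemma existsMidA (β : NPoint) (x : Edge) (hx : x ≠ β.1.1) (h1 : x ≠ β.1.2)
    (h2 : ¬Disjoint x.1 β.1.2.1) :
    ∃ m : NPoint, (x = m.1.2 ∨ Disjoint x.1 m.1.2.1) ∧ BG.Adj (inS m) (inS β) := by
  rcases β.2 with hyv | hyv
  · -- β = (y, y)
    have hβ : β.1 = (β.1.1, β.1.1) := by
      have : β.1 = (β.1.1, β.1.2) := rfl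
      rw [← hyv] at this
      exact this
    have h2' : ¬Disjoint x.1 β.1.1.1 := by rw [hyv]; exact h2
    obtain ⟨m, hm1, hm2, hm3⟩ := caseB β β.1.1 x hβ hx h2'
    refine ⟨m, Or.inr ?_, hm3⟩
    rw [← hm1]
    exact hm2.symm
  · -- Disjoint y v, y ≠ v
    have hc2 : ((β.1.1.1 ∪ β.1.2.1)ᶜ).card = 2 := by
      rw [Finset.card_compl, Finset.card_union_of_disjoint hyv, β.1.1.2, β.1.2.2]
      simp
    set c : Edge := ⟨(β.1.1.1 ∪ β.1.2.1)ᶜ, hc2⟩ with hc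
    have hdyc : Disjoint β.1.1.1 c.1 :=
      (disjoint_compl_right).mono_left Finset.subset_union_left
    have hdvc : Disjoint β.1.2.1 c.1 :=
      (disjoint_compl_right).mono_left Finset.subset_union_right
    by_cases hdy : Disjoint x.1 β.1.1.1
    · refine ⟨⟨(β.1.2, β.1.1), Or.inr hyv.symm⟩, Or.inr hdy, ?_⟩
      exact adj_line β.1.1 β.1.2 c β.1.2 β.1.1 c hyv hdyc hdvc
        (Set.insert_comm _ _ _) (ne_of_disj hyv).symm (ne_of_disj hdvc) (ne_of_disj hdyc)
        ⟨(β.1.2, β.1.1), Or.inr hyv.symm⟩ β rfl rfl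
    · have hdc : Disjoint x.1 c.1 := by
        by_contra hdc
        exact pigeon hyv hdyc hdvc hdy h2 hdc
      refine ⟨⟨(c, c), Or.inl rfl⟩, Or.inr hdc, ?_⟩
      refine adj_line β.1.1 c β.1.2 β.1.2 c β.1.1 hdyc hyv hdvc.symm ?_
        (ne_of_disj hdvc) (ne_of_disj hyv).symm (ne_of_disj hdyc).symm
        ⟨(c, c), Or.inl rfl⟩ β rfl rfl
      ext s
      simp only [Set.mem_insert_iff, Set.mem_singleton_iff]
      tauto

/-- Existence of a suitable midpoint for part (b). -/
private lemma existsMidB (β : NPoint) (u : Edge) (hu1 : u ≠ β.1.2) (h1 : u ≠ β.1.1)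
    (h2 : ¬Disjoint β.1.1.1 u.1) :
    ∃ m : NPoint, (m.1.1 = u ∨ Disjoint m.1.1.1 u.1) ∧ BG.Adj (inS m) (inS β) := by
  rcases β.2 with hyv | hyv
  · have hβ : β.1 = (β.1.1, β.1.1) := by
      have : β.1 = (β.1.1, β.1.2) := rfl
      rw [← hyv] at this
      exact this
    have h2' : ¬Disjoint u.1 β.1.1.1 := fun d => h2 d.symm
    obtain ⟨m, hm1, hm2, hm3⟩ := caseB β β.1.1 u hβ h1 h2'
    exact ⟨m, Or.inr hm2, hm3⟩
  · have hc2 : ((β.1.1.1 ∪ β.1.2.1)ᶜ).card = 2 := by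
      rw [Finset.card_compl, Finset.card_union_of_disjoint hyv, β.1.1.2, β.1.2.2]
      simp
    set c : Edge := ⟨(β.1.1.1 ∪ β.1.2.1)ᶜ, hc2⟩ with hc
    have hdyc : Disjoint β.1.1.1 c.1 :=
      (disjoint_compl_right).mono_left Finset.subset_union_left
    have hdvc : Disjoint β.1.2.1 c.1 :=
      (disjoint_compl_right).mono_left Finset.subset_union_right
    by_cases hdc : Disjoint c.1 u.1
    · refine ⟨⟨(c, c), Or.inl rfl⟩, Or.inr hdc, ?_⟩
      refine adj_line β.1.1 c β.1.2 β.1.2 c β.1.1 hdyc hyv hdvc.symm ?_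
        (ne_of_disj hdvc) (ne_of_disj hyv).symm (ne_of_disj hdyc).symm
        ⟨(c, c), Or.inl rfl⟩ β rfl rfl
      ext s
      simp only [Set.mem_insert_iff, Set.mem_singleton_iff]
      tauto
    · have hdv : Disjoint β.1.2.1 u.1 := by
        by_contra hdv
        exact pigeon hyv hdyc hdvc (fun d => h2 d.symm) (fun d => hdv d.symm)
          (fun d => hdc d.symm)
      refine ⟨⟨(β.1.2, β.1.1), Or.inr hyv.symm⟩, Or.inr hdv, ?_⟩
      exact adj_line β.1.1 β.1.2 c β.1.2 β.1.1 c hyv hdyc hdvc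
        (Set.insert_comm _ _ _) (ne_of_disj hyv).symm (ne_of_disj hdvc) (ne_of_disj hdyc)
        ⟨(β.1.2, β.1.1), Or.inr hyv.symm⟩ β rfl rfl


/-- Let `β = (y,v) ∈ 𝓟`. (a) If `x ∈ P` with `x ≠ y` and `v ∉ x^⊥`, then
`d(x,β) = 3` in 𝕊. (b) If `u' ∈ P'` with `u ≠ v` and `u ∉ y^⊥`, then `d(u',β) = 3` in 𝕊. -/
theorem statement13 (β : NPoint) :
    (∀ x : Edge, x ≠ β.1.1 → β.1.2 ∉ perp {x} →
      BG.dist (inP x) (inS β) = 3) ∧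
    (∀ u : Edge, u ≠ β.1.2 → u ∉ perp {β.1.1} →
      BG.dist (inP' u) (inS β) = 3) := by
  constructor
  · intro x hx hv
    have hv' : ¬(x = β.1.2 ∨ Disjoint x.1 β.1.2.1) := by
      intro h
      exact hv (fun s hs => by rw [Set.mem_singleton_iff] at hs; subst hs; exact h)
    push_neg at hv'
    obtain ⟨hxv, hxvd⟩ := hv'
    obtain ⟨m, hm, hadj3⟩ := existsMidA β x hx hxv hxvd
    have hne : inP x ≠ inS β := fun h => eqPS.mp h
    have hnadj : ¬ BG.Adj (inP x) (inS β) := fun h => hx (adj_PS_elim h).symm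
    have hmid : ∀ z, ¬(BG.Adj (inP x) z ∧ BG.Adj z (inS β)) := by
      rintro (p | e | e) ⟨ha, hb⟩
      · have hp1 : p.1.1 = x := adj_PS_elim ha
        have hpq : NG.Adj p β := adj_SS_elim hb
        have := NG_adj_perp hpq.symm
        rw [hp1] at this
        rcases this with h | h
        · exact hxv h
        · exact hxvd h
      · exact not_adj_PP ha
      · have he : β.1.2 = e := adj_P'S_elim hb
        have := adj_PP'_elim ha
        rw [← he] at this
        rcases this with h | h
        · exact hxv h
        · exact hxvd h
    exact dist_eq_three hne hnadj hmid (adj_PP' ⟨(x, m.1.2), hm⟩) (adj_P'S m) hadj3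
  · intro u hu huv
    have hu' : ¬(β.1.1 = u ∨ Disjoint β.1.1.1 u.1) := by
      intro h
      exact huv (fun s hs => by rw [Set.mem_singleton_iff] at hs; subst hs; exact h)
    push_neg at hu'
    obtain ⟨huy, huyd⟩ := hu'
    obtain ⟨m, hm, hadj3⟩ := existsMidB β u hu (fun h => huy h.symm) huyd
    have hne : inP' u ≠ inS β := fun h => eqP'S.mp h
    have hnadj : ¬ BG.Adj (inP' u) (inS β) := fun h => hu (adj_P'S_elim h).symm
    have hmid : ∀ z, ¬(BG.Adj (inP' u) z ∧ BG.Adj z (inS β)) := by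
      rintro (p | e | e) ⟨ha, hb⟩
      · have hp2 : p.1.2 = u := adj_P'S_elim ha
        have hpq : NG.Adj p β := adj_SS_elim hb
        have := NG_adj_perp hpq
        rw [hp2] at this
        rcases this with h | h
        · exact huy h
        · exact huyd h
      · have he : β.1.1 = e := adj_PS_elim hb
        have := adj_PP'_elim ha.symm
        rw [← he] at this
        rcases this with h | h
        · exact huy h
        · exact huyd h
      · exact not_adj_P'P' ha
    exact dist_eq_three hne hnadj hmid (adj_PP' ⟨(m.1.1, u), hm⟩).symm (adj_PS m) hadj3
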